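/- Let f be an entire function omitting 0 (f(z) ≠ 0 for all z) that is unbounded. Then there exist arbitrarily large R > 0 such that some point w_m on the circle |z| = R satisfies |f(w_m)| < 1. -/

import Mathlib

/-- An unbounded entire function omitting 0 has points of small modulus (`|f| < 1`)
on arbitrarily large circles. -/
theorem unbounded_nonvanishing_small_on_large_circles
    (f : ℂ → ℂ) (hf : Differentiable ℂ f) (h0 : ∀ z, f z ≠ 0)
    (hub : ¬BddAbove (Set.range fun z => ‖f z‖)) :
    ∀ R₀ : ℝ, 0 < R₀ →
      ∃ R : ℝ, R₀ < R ∧ ∃ w : ℂ, ‖w‖ = R ∧ ‖f w‖ < 1 := by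
  intro R₀ hR₀
  by_contra h
  push_neg at h
  -- h : ∀ R, R₀ < R → ∀ w, |w| = R → 1 ≤ |f w|
  have hbig : ∀ z : ℂ, R₀ < ‖z‖ → 1 ≤ ‖f z‖ := fun z hz =>
    h ‖z‖ hz z rfl
  set g : ℂ → ℂ := fun z => (f z)⁻¹ with hg
  have hgd : Differentiable ℂ g := hf.inv h0
  -- bound on compact ball
  obtain ⟨C, hC⟩ := (isCompact_closedBall (0 : ℂ) (R₀ + 1)).exists_bound_of_continuousOn
    hgd.continuous.continuousOn
  have hbdd : Bornology.IsBounded (Set.range g) := by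
    rw [isBounded_iff_forall_norm_le]
    refine ⟨max C 1, ?_⟩
    rintro _ ⟨z, rfl⟩
    by_cases hz : ‖z‖ ≤ R₀ + 1
    · exact le_trans (hC z (by simpa [Metric.mem_closedBall, Complex.dist_eq] using hz))
        (le_max_left _ _)
    · push_neg at hz
      have h1 : 1 ≤ ‖f z‖ := hbig z (lt_trans (by linarith) hz)
      have : ‖g z‖ ≤ 1 := by
        simp only [hg, norm_inv]
        exact inv_le_one_of_one_le₀ h1
      exact this.trans (le_max_right _ _)
  have hconst := hgd.apply_eq_apply_of_bounded hbdd
  have hfconst : ∀ z, f z = f 0 := by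
    intro z
    have := hconst z 0
    have : (f z)⁻¹ = (f 0)⁻¹ := this
    exact inv_injective this
  apply hub
  refine ⟨‖f 0‖, ?_⟩
  rintro _ ⟨z, rfl⟩
  simp [hfconst z]
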